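/- Let S be 𝖱 or 𝖱⁺, and let q ≥ r ≥ 0. Let g be a multivariate polynomial over S in variables indexed by X ⊕ (Fin q) ⊕ (Fin r), where the Fin q block consists of hypercube variables y₁,…,y_q and the Fin r block consists of complement variables ȳ₁,…,ȳ_r. Then for every assignment x of S-values to the X-variables: the minimum over all Boolean assignments ε : Fin q → {∞,0} of the evaluation of g at (x; y = ε; ȳᵢ = complement of εᵢ for 1 ≤ i ≤ r) equals the minimum over all Boolean assignments σ : Fin r → {∞,0} of the evaluation of g at (x; yᵢ = σᵢ for i ≤ r, y_j = 0 for r < j ≤ q; ȳᵢ = complement of σᵢ). In particular, a hypercube minimum over 2^q Boolean points in which only r of the variables are complemented collapses to a minimum over 2^r substitutions. -/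

import Mathlib

open MvPolynomial Tropical

/-- `𝖱`: the min-plus semiring on `ℝ ∪ {∞}`. -/
abbrev TR : Type := Tropical (WithTop ℝ)

/-- `𝖱⁺`: the min-plus semiring on `ℝ≥0 ∪ {∞}`. -/
abbrev TRP : Type := Tropical (WithTop NNReal)

/-- The Boolean values of a min-plus semiring, indexed by `Bool`:
`true ↦ 0` (the multiplicative identity, tropical `1`) and
`false ↦ ∞` (the additive identity, tropical `0`).
The complement of the Boolean value `bv S b` is `bv S (!b)`. -/
def bv (S : Type) [Zero S] [One S] (b : Bool) : S := if b then 1 else 0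

/-- over `S = 𝖱` or `S = 𝖱⁺`, with `q ≥ r ≥ 0`, for a polynomial `g`
in variables `X ⊕ (Fin q ⊕ Fin r)` (hypercube variables `y₁,…,y_q` and complement
variables `ȳ₁,…,ȳ_r`) and any assignment `x` to the `X`-variables:
the minimum over all Boolean assignments `ε : Fin q → {∞,0}` of the evaluation of
`g` at `(x; y = ε; ȳᵢ = complement of εᵢ for i ≤ r)` equals the minimum over all
Boolean assignments `σ : Fin r → {∞,0}` of the evaluation of `g` at
`(x; yᵢ = σᵢ for i ≤ r, y_j = 0 for r < j ≤ q; ȳᵢ = complement of σᵢ)`. -/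

lemma eval_mono {R : Type} [AddCancelCommMonoid R] [LinearOrder R] [IsOrderedAddMonoid R] {σ : Type*}
    (g : MvPolynomial σ (Tropical (WithTop R)))
    {v w : σ → Tropical (WithTop R)} (h : ∀ i, v i ≤ w i) :
    eval v g ≤ eval w g := by
  induction g using MvPolynomial.induction_on with
  | C a => simp
  | add p q hp hq => simp only [map_add]; exact add_le_add hp hq
  | mul_X p i hp => simp only [map_mul, eval_X]; exact mul_le_mul' hp (h i)

lemma one_le_bv {R : Type} [AddCancelCommMonoid R] [LinearOrder R] [IsOrderedAddMonoid R] (b : Bool) :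
    (1 : Tropical (WithTop R)) ≤ bv (Tropical (WithTop R)) b := by
  cases b
  · exact untrop_le_iff.mp (by simp [bv])
  · simp [bv]

lemma key {R : Type} [AddCancelCommMonoid R] [LinearOrder R] [IsOrderedAddMonoid R] (X : Type) (q r : ℕ) (h : r ≤ q)
    (g : MvPolynomial (X ⊕ (Fin q ⊕ Fin r)) (Tropical (WithTop R)))
    (x : X → Tropical (WithTop R)) :
    (∑ ε : Fin q → Bool,
      eval (Sum.elim x (Sum.elim (fun i => bv (Tropical (WithTop R)) (ε i))
        (fun i => bv (Tropical (WithTop R)) (!(ε (Fin.castLE h i)))))) g)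
    = ∑ σ : Fin r → Bool,
        eval (Sum.elim x (Sum.elim
          (fun i : Fin q => if hi : (i : ℕ) < r then bv (Tropical (WithTop R)) (σ ⟨i, hi⟩) else 1)
          (fun i => bv (Tropical (WithTop R)) (!(σ i))))) g := by
  apply untrop_injective
  rw [Finset.untrop_sum', Finset.untrop_sum']
  apply le_antisymm
  · apply Finset.le_inf
    intro σ _
    refine Finset.inf_le_of_le
      (b := fun j : Fin q => if hj : (j : ℕ) < r then σ ⟨j, hj⟩ else true)
      (Finset.mem_univ _) (le_of_eq ?_)
    simp only [Function.comp]
    apply congrArg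
    apply congrArg (fun v => eval v g)
    funext z
    rcases z with z | z | z
    · rfl
    · by_cases hz : (z : ℕ) < r <;> simp [bv, hz]
    · have hz : ((Fin.castLE h z : Fin q) : ℕ) < r := z.isLt
      simp [hz]
  · apply Finset.le_inf
    intro ε _
    refine Finset.inf_le_of_le
      (b := fun i : Fin r => ε (Fin.castLE h i)) (Finset.mem_univ _) ?_
    refine untrop_le_iff.mpr (eval_mono g ?_)
    rintro (z | z | z)
    · exact le_rfl
    · dsimp only [Sum.elim_inr, Sum.elim_inl]
      by_cases hz : (z : ℕ) < r
      · rw [dif_pos hz]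
        have : Fin.castLE h ⟨(z : ℕ), hz⟩ = z := by ext; rfl
        rw [this]
      · rw [dif_neg hz]
        exact one_le_bv _
    · exact le_rfl

theorem stmt1 :
    (∀ (X : Type) (q r : ℕ) (h : r ≤ q)
      (g : MvPolynomial (X ⊕ (Fin q ⊕ Fin r)) TR) (x : X → TR),
      (∑ ε : Fin q → Bool,
        eval (Sum.elim x (Sum.elim (fun i => bv TR (ε i))
          (fun i => bv TR (!(ε (Fin.castLE h i)))))) g)
      = ∑ σ : Fin r → Bool,
          eval (Sum.elim x (Sum.elim
            (fun i : Fin q => if hi : (i : ℕ) < r then bv TR (σ ⟨i, hi⟩) else 1)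
            (fun i => bv TR (!(σ i))))) g) ∧
    (∀ (X : Type) (q r : ℕ) (h : r ≤ q)
      (g : MvPolynomial (X ⊕ (Fin q ⊕ Fin r)) TRP) (x : X → TRP),
      (∑ ε : Fin q → Bool,
        eval (Sum.elim x (Sum.elim (fun i => bv TRP (ε i))
          (fun i => bv TRP (!(ε (Fin.castLE h i)))))) g)
      = ∑ σ : Fin r → Bool,
          eval (Sum.elim x (Sum.elim
            (fun i : Fin q => if hi : (i : ℕ) < r then bv TRP (σ ⟨i, hi⟩) else 1)
            (fun i => bv TRP (!(σ i))))) g) := by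
  exact ⟨fun X q r h g x => key X q r h g x, fun X q r h g x => key X q r h g x⟩
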